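/- arXiv:2005.12255 — 2 statements merged into one kernel-verified Lean document; each statement's English description precedes it below -/
import Mathlib

section
/- Let G be a finite bipartite graph with parts A and B that is biregular with degrees (a,b). Let λ₃ be the operator norm of the adjacency matrix A(G) restricted to the subspace W of real vectors indexed by A ∪ B that are orthogonal to both indicator vectors 1_A and 1_B. Then for all X ⊆ A and Y ⊆ B, the number e(X,Y) of edges between X and Y satisfies |e(X,Y) − (a/|B|)·|X||Y|| ≤ λ₃ · √(|X||Y|). -/
open Matrix
open scoped Classical


lemma sum_ind {γ : Type} [Fintype γ] (p : γ → Prop) :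
    (∑ y : γ, (if p y then (1:ℝ) else 0)) = {y : γ | p y}.ncard := by
  classical
  rw [Finset.sum_boole]
  congr 1
  rw [Set.ncard_eq_toFinset_card', Set.toFinset_setOf]

/-- The adjacency relation of the bipartite graph on `A ⊕ B` determined by the
bipartite adjacency relation `r : A → B → Prop`. -/
def biAdj {A B : Type} (r : A → B → Prop) : (A ⊕ B) → (A ⊕ B) → Prop
  | Sum.inl x, Sum.inr y => r x y
  | Sum.inr y, Sum.inl x => r x y
  | _, _ => False

/-- The (real) adjacency matrix of the bipartite graph on `A ⊕ B` determined by `r`. -/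
noncomputable def adjMat {A B : Type} [Fintype A] [Fintype B] (r : A → B → Prop) :
    Matrix (A ⊕ B) (A ⊕ B) ℝ :=
  Matrix.of fun i j => if biAdj r i j then (1 : ℝ) else 0

/-- expander mixing lemma for biregular bipartite graphs.
`lam3` is the operator norm of the adjacency matrix restricted to the subspace of
vectors orthogonal to the indicator vectors `1_A` and `1_B`, realized as the
supremum of `‖A(G)·v‖` over vectors `v` in that subspace of Euclidean norm at most 1. -/
theorem bipartite_expander_mixing {A B : Type} [Fintype A] [Fintype B]
    (r : A → B → Prop) (a b : ℕ)
    (hA : ∀ x : A, {y : B | r x y}.ncard = a)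
    (hB : ∀ y : B, {x : A | r x y}.ncard = b)
    (lam3 : ℝ)
    (hlam3 : lam3 = sSup {c : ℝ | ∃ v : (A ⊕ B) → ℝ,
        (∑ x : A, v (Sum.inl x)) = 0 ∧ (∑ y : B, v (Sum.inr y)) = 0 ∧
        Real.sqrt (∑ i, v i ^ 2) ≤ 1 ∧
        c = Real.sqrt (∑ i, ((adjMat r).mulVec v) i ^ 2)})
    (X : Set A) (Y : Set B) :
    |({p : A × B | p.1 ∈ X ∧ p.2 ∈ Y ∧ r p.1 p.2}.ncard : ℝ) -
        (a : ℝ) / (Fintype.card B : ℝ) * (X.ncard : ℝ) * (Y.ncard : ℝ)| ≤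
      lam3 * Real.sqrt ((X.ncard : ℝ) * (Y.ncard : ℝ)) := by
  classical
  set S := {c : ℝ | ∃ v : (A ⊕ B) → ℝ,
        (∑ x : A, v (Sum.inl x)) = 0 ∧ (∑ y : B, v (Sum.inr y)) = 0 ∧
        Real.sqrt (∑ i, v i ^ 2) ≤ 1 ∧
        c = Real.sqrt (∑ i, ((adjMat r).mulVec v) i ^ 2)} with hS
  set M := adjMat r with hM
  have hMll : ∀ x x' : A, M (Sum.inl x) (Sum.inl x') = 0 := by
    intro x x'; simp [hM, adjMat, biAdj]
  have hMlr : ∀ (x : A) (y : B), M (Sum.inl x) (Sum.inr y) = if r x y then (1:ℝ) else 0 := by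
    intro x y; simp [hM, adjMat, biAdj]
    exact if_congr Iff.rfl rfl rfl
  have hMrl : ∀ (x : A) (y : B), M (Sum.inr y) (Sum.inl x) = if r x y then (1:ℝ) else 0 := by
    intro x y; simp [hM, adjMat, biAdj]
    exact if_congr Iff.rfl rfl rfl
  have hMrr : ∀ y y' : B, M (Sum.inr y) (Sum.inr y') = 0 := by
    intro y y'; simp [hM, adjMat, biAdj]
  have hdegA : ∀ x : A, (∑ y : B, (if r x y then (1:ℝ) else 0)) = a := by
    intro x; rw [sum_ind]; exact_mod_cast congrArg (Nat.cast (R := ℝ)) (hA x)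
  have hdegB : ∀ y : B, (∑ x : A, (if r x y then (1:ℝ) else 0)) = b := by
    intro y; rw [sum_ind]; exact_mod_cast congrArg (Nat.cast (R := ℝ)) (hB y)
  set m : ℝ := (Fintype.card A : ℝ) with hm
  set n : ℝ := (Fintype.card B : ℝ) with hn
  have hmab : m * (a : ℝ) = n * (b : ℝ) := by
    have h1 : (∑ x : A, ∑ y : B, (if r x y then (1:ℝ) else 0)) = m * a := by
      simp [hdegA, hm, mul_comm]
    have h2 : (∑ y : B, ∑ x : A, (if r x y then (1:ℝ) else 0)) = n * b := by
      simp [hdegB, hn, mul_comm]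
    rw [← h1, ← h2, Finset.sum_comm]
  set c : ℝ := (X.ncard : ℝ) / m with hc
  set d : ℝ := (Y.ncard : ℝ) / n with hd
  have hXm : X.ncard ≤ Fintype.card A := by
    simpa [Set.ncard_univ, Nat.card_eq_fintype_card] using
      Set.ncard_le_ncard (Set.subset_univ X) Set.finite_univ
  have hYn : Y.ncard ≤ Fintype.card B := by
    simpa [Set.ncard_univ, Nat.card_eq_fintype_card] using
      Set.ncard_le_ncard (Set.subset_univ Y) Set.finite_univ
  have hcm : c * m = (X.ncard : ℝ) := by
    rcases eq_or_ne m 0 with h0 | h0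
    · rw [hm] at h0
      have hA0 : Fintype.card A = 0 := by exact_mod_cast h0
      have hX0 : X.ncard = 0 := by omega
      simp [hc, hX0]
    · rw [hc, div_mul_cancel₀ _ h0]
  have hdn : d * n = (Y.ncard : ℝ) := by
    rcases eq_or_ne n 0 with h0 | h0
    · rw [hn] at h0
      have hB0 : Fintype.card B = 0 := by exact_mod_cast h0
      have hY0 : Y.ncard = 0 := by omega
      simp [hd, hY0]
    · rw [hd, div_mul_cancel₀ _ h0]
  have hc0 : 0 ≤ c := div_nonneg (by positivity) (by rw [hm]; positivity)
  have hd0 : 0 ≤ d := div_nonneg (by positivity) (by rw [hn]; positivity)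
  set u : (A ⊕ B) → ℝ :=
    Sum.elim (fun x => (if x ∈ X then (1:ℝ) else 0) - c) (fun _ => 0) with hu
  set w : (A ⊕ B) → ℝ :=
    Sum.elim (fun _ => 0) (fun y => (if y ∈ Y then (1:ℝ) else 0) - d) with hw
  have hsumX : (∑ x : A, (if x ∈ X then (1:ℝ) else 0)) = (X.ncard : ℝ) := sum_ind _
  have hsumY : (∑ y : B, (if y ∈ Y then (1:ℝ) else 0)) = (Y.ncard : ℝ) := sum_ind _
  have hsumwA : (∑ x : A, w (Sum.inl x)) = 0 := by simp [hw]
  have hsumwB : (∑ y : B, w (Sum.inr y)) = 0 := by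
    simp only [hw, Sum.elim_inr, Finset.sum_sub_distrib, hsumY, Finset.sum_const,
      Finset.card_univ, nsmul_eq_mul, ← hn]
    rw [mul_comm, hdn]; ring
  have hMw_l : ∀ x : A, (M *ᵥ w) (Sum.inl x)
      = ∑ y : B, (if r x y then (1:ℝ) else 0) * ((if y ∈ Y then (1:ℝ) else 0) - d) := by
    intro x
    simp [Matrix.mulVec, dotProduct, Fintype.sum_sum_type, hMll, hMlr, hw]
  have key : ({p : A × B | p.1 ∈ X ∧ p.2 ∈ Y ∧ r p.1 p.2}.ncard : ℝ) -
      (a : ℝ) / n * (X.ncard : ℝ) * (Y.ncard : ℝ) = ∑ i, u i * (M *ᵥ w) i := by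
    have he : ({p : A × B | p.1 ∈ X ∧ p.2 ∈ Y ∧ r p.1 p.2}.ncard : ℝ)
        = ∑ x : A, ∑ y : B, (if x ∈ X then (1:ℝ) else 0) *
            ((if r x y then (1:ℝ) else 0) * (if y ∈ Y then (1:ℝ) else 0)) := by
      rw [← sum_ind (fun p : A × B => p.1 ∈ X ∧ p.2 ∈ Y ∧ r p.1 p.2), Fintype.sum_prod_type]
      refine Finset.sum_congr rfl fun x _ => Finset.sum_congr rfl fun y _ => ?_
      by_cases h1 : x ∈ X <;> by_cases h2 : y ∈ Y <;> by_cases h3 : r x y <;>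
        simp [h1, h2, h3]
    have hrhs : (∑ i, u i * (M *ᵥ w) i)
        = ∑ x : A, ((if x ∈ X then (1:ℝ) else 0) - c) *
            (∑ y : B, (if r x y then (1:ℝ) else 0) * ((if y ∈ Y then (1:ℝ) else 0) - d)) := by
      rw [Fintype.sum_sum_type]
      simp only [hu, Sum.elim_inl, Sum.elim_inr, zero_mul, Finset.sum_const_zero, add_zero]
      exact Finset.sum_congr rfl fun x _ => by rw [hMw_l]
    have hinner : ∀ x : A,
        (∑ y : B, (if r x y then (1:ℝ) else 0) * ((if y ∈ Y then (1:ℝ) else 0) - d))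
        = (∑ y : B, (if r x y then (1:ℝ) else 0) * (if y ∈ Y then (1:ℝ) else 0)) - d * a := by
      intro x
      rw [← hdegA x, Finset.mul_sum, ← Finset.sum_sub_distrib]
      exact Finset.sum_congr rfl fun y _ => by ring
    have hswap : (∑ x : A, ∑ y : B, (if r x y then (1:ℝ) else 0) * (if y ∈ Y then (1:ℝ) else 0))
        = (b : ℝ) * (Y.ncard : ℝ) := by
      rw [Finset.sum_comm, ← hsumY, Finset.mul_sum]
      refine Finset.sum_congr rfl fun y _ => ?_
      rw [← hdegB y, Finset.sum_mul]
    rw [he, hrhs]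
    have expand : ∀ x : A, ((if x ∈ X then (1:ℝ) else 0) - c) *
        ((∑ y : B, (if r x y then (1:ℝ) else 0) * (if y ∈ Y then (1:ℝ) else 0)) - d * a)
        = (if x ∈ X then (1:ℝ) else 0) *
            (∑ y : B, (if r x y then (1:ℝ) else 0) * (if y ∈ Y then (1:ℝ) else 0))
          - c * (∑ y : B, (if r x y then (1:ℝ) else 0) * (if y ∈ Y then (1:ℝ) else 0))
          - d * a * (if x ∈ X then (1:ℝ) else 0) + c * (d * a) := by
      intro x; ring
    calc (∑ x : A, ∑ y : B, (if x ∈ X then (1:ℝ) else 0) *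
            ((if r x y then (1:ℝ) else 0) * (if y ∈ Y then (1:ℝ) else 0)))
          - (a : ℝ) / n * (X.ncard : ℝ) * (Y.ncard : ℝ)
        = ∑ x : A, ((if x ∈ X then (1:ℝ) else 0) - c) *
            ((∑ y : B, (if r x y then (1:ℝ) else 0) * (if y ∈ Y then (1:ℝ) else 0)) - d * a) := by
          simp only [expand]
          rw [Finset.sum_add_distrib, Finset.sum_sub_distrib, Finset.sum_sub_distrib]
          rw [← Finset.mul_sum, hswap, ← Finset.mul_sum, hsumX]
          rw [Finset.sum_const, Finset.card_univ, nsmul_eq_mul, ← hm]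
          have hmuls : (∑ x : A, (if x ∈ X then (1:ℝ) else 0) *
              (∑ y : B, (if r x y then (1:ℝ) else 0) * (if y ∈ Y then (1:ℝ) else 0)))
              = ∑ x : A, ∑ y : B, (if x ∈ X then (1:ℝ) else 0) *
                  ((if r x y then (1:ℝ) else 0) * (if y ∈ Y then (1:ℝ) else 0)) := by
            exact Finset.sum_congr rfl fun x _ => by rw [Finset.mul_sum]
          rw [hmuls]
          have h1 : d * (a : ℝ) * (X.ncard : ℝ) = (a : ℝ) / n * (X.ncard : ℝ) * (Y.ncard : ℝ) := by
            rw [hd]; ring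
          have h2 : c * ((b : ℝ) * (Y.ncard : ℝ)) = m * (c * (d * a)) := by
            rw [← hdn]
            linear_combination (-(c * d)) * hmab
          linarith [h1, h2]
      _ = ∑ x : A, ((if x ∈ X then (1:ℝ) else 0) - c) *
            (∑ y : B, (if r x y then (1:ℝ) else 0) * ((if y ∈ Y then (1:ℝ) else 0) - d)) := by
          exact Finset.sum_congr rfl fun x _ => by rw [hinner]
  have hU : (∑ i, u i ^ 2) ≤ (X.ncard : ℝ) := by
    have h1 : (∑ i, u i ^ 2)
        = (X.ncard : ℝ) - 2 * c * (X.ncard : ℝ) + m * c ^ 2 := by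
      rw [Fintype.sum_sum_type]
      simp only [hu, Sum.elim_inl, Sum.elim_inr]
      have hBpart : (∑ _y : B, (0:ℝ) ^ 2) = 0 := by simp
      rw [hBpart, add_zero]
      calc ∑ x : A, ((if x ∈ X then (1:ℝ) else 0) - c) ^ 2
          = ∑ x : A, (((if x ∈ X then (1:ℝ) else 0)
              - 2 * c * (if x ∈ X then (1:ℝ) else 0)) + c ^ 2) :=
            Finset.sum_congr rfl fun x _ => by by_cases hx : x ∈ X <;> simp [hx] <;> ring
        _ = ((∑ x : A, (if x ∈ X then (1:ℝ) else 0))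
              - ∑ x : A, 2 * c * (if x ∈ X then (1:ℝ) else 0)) + ∑ _x : A, c ^ 2 := by
            rw [Finset.sum_add_distrib, Finset.sum_sub_distrib]
        _ = (X.ncard : ℝ) - 2 * c * (X.ncard : ℝ) + m * c ^ 2 := by
            rw [hsumX, ← Finset.mul_sum, hsumX, Finset.sum_const, Finset.card_univ,
              nsmul_eq_mul, ← hm]
    have h3 : m * c ^ 2 = c * (X.ncard : ℝ) := by
      calc m * c ^ 2 = (c * m) * c := by ring
        _ = c * (X.ncard : ℝ) := by rw [hcm]; ring
    have h4 : 0 ≤ c * (X.ncard : ℝ) := mul_nonneg hc0 (by positivity)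
    rw [h1, h3]
    linarith
  have hW : (∑ i, w i ^ 2) ≤ (Y.ncard : ℝ) := by
    have h1 : (∑ i, w i ^ 2)
        = (Y.ncard : ℝ) - 2 * d * (Y.ncard : ℝ) + n * d ^ 2 := by
      rw [Fintype.sum_sum_type]
      simp only [hw, Sum.elim_inl, Sum.elim_inr]
      have hApart : (∑ _x : A, (0:ℝ) ^ 2) = 0 := by simp
      rw [hApart, zero_add]
      calc ∑ y : B, ((if y ∈ Y then (1:ℝ) else 0) - d) ^ 2
          = ∑ y : B, (((if y ∈ Y then (1:ℝ) else 0)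
              - 2 * d * (if y ∈ Y then (1:ℝ) else 0)) + d ^ 2) :=
            Finset.sum_congr rfl fun y _ => by by_cases hy : y ∈ Y <;> simp [hy] <;> ring
        _ = ((∑ y : B, (if y ∈ Y then (1:ℝ) else 0))
              - ∑ y : B, 2 * d * (if y ∈ Y then (1:ℝ) else 0)) + ∑ _y : B, d ^ 2 := by
            rw [Finset.sum_add_distrib, Finset.sum_sub_distrib]
        _ = (Y.ncard : ℝ) - 2 * d * (Y.ncard : ℝ) + n * d ^ 2 := by
            rw [hsumY, ← Finset.mul_sum, hsumY, Finset.sum_const, Finset.card_univ,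
              nsmul_eq_mul, ← hn]
    have h3 : n * d ^ 2 = d * (Y.ncard : ℝ) := by
      calc n * d ^ 2 = (d * n) * d := by ring
        _ = d * (Y.ncard : ℝ) := by rw [hdn]; ring
    have h4 : 0 ≤ d * (Y.ncard : ℝ) := mul_nonneg hd0 (by positivity)
    rw [h1, h3]
    linarith
  have hsqU : Real.sqrt (∑ i, u i ^ 2) ≤ Real.sqrt (X.ncard : ℝ) := Real.sqrt_le_sqrt hU
  have hsqW : Real.sqrt (∑ i, w i ^ 2) ≤ Real.sqrt (Y.ncard : ℝ) := Real.sqrt_le_sqrt hW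
  have hbdd : BddAbove S := by
    refine ⟨Real.sqrt (∑ i, ∑ j, M i j ^ 2), ?_⟩
    rintro t ⟨v, -, -, hv1, rfl⟩
    have h0 : (0:ℝ) ≤ ∑ i, v i ^ 2 := Finset.sum_nonneg fun i _ => sq_nonneg _
    have hv2 : (∑ i, v i ^ 2) ≤ 1 := by
      nlinarith [Real.sq_sqrt h0, Real.sqrt_nonneg (∑ i, v i ^ 2)]
    apply Real.sqrt_le_sqrt
    apply Finset.sum_le_sum
    intro i _
    have hcs := Finset.sum_mul_sq_le_sq_mul_sq Finset.univ (fun j => M i j) v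
    have hMnn : (0:ℝ) ≤ ∑ j, M i j ^ 2 := Finset.sum_nonneg fun j _ => sq_nonneg _
    have hmv : (M *ᵥ v) i ^ 2 = (∑ j, M i j * v j) ^ 2 := by
      simp [Matrix.mulVec, dotProduct]
    calc (M *ᵥ v) i ^ 2 = (∑ j, M i j * v j) ^ 2 := hmv
      _ ≤ (∑ j, M i j ^ 2) * (∑ j, v j ^ 2) := hcs
      _ ≤ (∑ j, M i j ^ 2) * 1 := mul_le_mul_of_nonneg_left hv2 hMnn
      _ = ∑ j, M i j ^ 2 := mul_one _
  have h0S : (0:ℝ) ∈ S := by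
    refine ⟨fun _ => 0, by simp, by simp, by simp, ?_⟩
    rw [show (fun _ : A ⊕ B => (0:ℝ)) = 0 from rfl, Matrix.mulVec_zero]
    simp
  have hlam0 : 0 ≤ lam3 := hlam3 ▸ le_csSup hbdd h0S
  have hop : Real.sqrt (∑ i, (M *ᵥ w) i ^ 2) ≤ lam3 * Real.sqrt (∑ i, w i ^ 2) := by
    set t := Real.sqrt (∑ i, w i ^ 2) with ht
    have ht0 : 0 ≤ t := Real.sqrt_nonneg _
    rcases eq_or_ne t 0 with h0 | h0
    · have hnn : (0:ℝ) ≤ ∑ i, w i ^ 2 := Finset.sum_nonneg fun i _ => sq_nonneg _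
      have hsz : Real.sqrt (∑ i, w i ^ 2) = 0 := by rw [← ht]; exact h0
      have hz : (∑ i, w i ^ 2) = 0 := le_antisymm (Real.sqrt_eq_zero'.mp hsz) hnn
      have hwz : ∀ i, w i = 0 := by
        intro i
        have h5 := (Finset.sum_eq_zero_iff_of_nonneg
          (fun i _ => sq_nonneg (w i))).mp hz i (Finset.mem_univ i)
        exact (pow_eq_zero_iff (by norm_num : (2:ℕ) ≠ 0)).mp h5
      rw [show w = 0 from funext hwz, Matrix.mulVec_zero, h0, mul_zero]
      simp
    · have htpos : 0 < t := lt_of_le_of_ne ht0 (Ne.symm h0)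
      have hmem : t⁻¹ * Real.sqrt (∑ i, (M *ᵥ w) i ^ 2) ∈ S := by
        refine ⟨fun i => t⁻¹ * w i, ?_, ?_, ?_, ?_⟩
        · rw [← Finset.mul_sum, hsumwA, mul_zero]
        · rw [← Finset.mul_sum, hsumwB, mul_zero]
        · have h5 : (∑ i, (t⁻¹ * w i) ^ 2) = t⁻¹ ^ 2 * ∑ i, w i ^ 2 := by
            rw [Finset.mul_sum]; exact Finset.sum_congr rfl fun i _ => by ring
          rw [h5, Real.sqrt_mul (sq_nonneg _), Real.sqrt_sq (inv_nonneg.mpr ht0), ← ht,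
            inv_mul_cancel₀ h0]
        · rw [show (fun i => t⁻¹ * w i) = t⁻¹ • w from rfl, Matrix.mulVec_smul]
          have h5 : (∑ i, (t⁻¹ • (M *ᵥ w)) i ^ 2) = t⁻¹ ^ 2 * ∑ i, (M *ᵥ w) i ^ 2 := by
            rw [Finset.mul_sum]
            exact Finset.sum_congr rfl fun i _ => by
              simp only [Pi.smul_apply, smul_eq_mul]; ring
          rw [h5, Real.sqrt_mul (sq_nonneg _), Real.sqrt_sq (inv_nonneg.mpr ht0)]
      have hle : t⁻¹ * Real.sqrt (∑ i, (M *ᵥ w) i ^ 2) ≤ lam3 := hlam3 ▸ le_csSup hbdd hmem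
      calc Real.sqrt (∑ i, (M *ᵥ w) i ^ 2)
          = t * (t⁻¹ * Real.sqrt (∑ i, (M *ᵥ w) i ^ 2)) := by
            field_simp
        _ ≤ t * lam3 := mul_le_mul_of_nonneg_left hle ht0
        _ = lam3 * t := mul_comm _ _
  have hCS : |∑ i, u i * (M *ᵥ w) i|
      ≤ Real.sqrt (∑ i, u i ^ 2) * Real.sqrt (∑ i, (M *ᵥ w) i ^ 2) := by
    have h := Finset.sum_mul_sq_le_sq_mul_sq Finset.univ u (fun i => (M *ᵥ w) i)
    have h2 := Real.sqrt_le_sqrt h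
    rw [Real.sqrt_sq_eq_abs] at h2
    rwa [Real.sqrt_mul (Finset.sum_nonneg fun i _ => sq_nonneg _)] at h2
  rw [key]
  calc |∑ i, u i * (M *ᵥ w) i|
      ≤ Real.sqrt (∑ i, u i ^ 2) * Real.sqrt (∑ i, (M *ᵥ w) i ^ 2) := hCS
    _ ≤ Real.sqrt (X.ncard : ℝ) * (lam3 * Real.sqrt (Y.ncard : ℝ)) := by
        refine mul_le_mul hsqU ?_ (Real.sqrt_nonneg _) (Real.sqrt_nonneg _)
        calc Real.sqrt (∑ i, (M *ᵥ w) i ^ 2) ≤ lam3 * Real.sqrt (∑ i, w i ^ 2) := hop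
          _ ≤ lam3 * Real.sqrt (Y.ncard : ℝ) := mul_le_mul_of_nonneg_left hsqW hlam0
    _ = lam3 * Real.sqrt ((X.ncard : ℝ) * (Y.ncard : ℝ)) := by
        rw [Real.sqrt_mul (by positivity)]
        ring
end

section
/- Let q be an odd prime power, let k, h, n be integers with 0 < k < h ≤ n, and let K be a dot_k-subspace of (𝔽_q^n, dot_n). Let K^⊥ be the orthogonal complement of K with respect to the bilinear form of dot_n, so that 𝔽_q^n = K ⊕ K^⊥. Then the map W ↦ K ⊕ W is a bijection from the set of subspaces W ⊆ K^⊥ that are dot_{h−k}-subspaces of (𝔽_q^n, dot_n) onto the set of dot_h-subspaces of (𝔽_q^n, dot_n) containing K. -/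
open Module

/-- The quadratic form `x₁² + ⋯ + x_m²` on `F^m`. -/
noncomputable def dotForm (F : Type) [Field F] (m : ℕ) : QuadraticForm F (Fin m → F) :=
  QuadraticMap.weightedSumSquares F (fun _ : Fin m => (1 : F))

/-- The restriction of `dotForm F n` to a linear subspace `W ⊆ F^n`. -/
noncomputable def restForm (F : Type) [Field F] (n : ℕ) (W : Submodule F (Fin n → F)) :
    QuadraticForm F W :=
  (dotForm F n).comp W.subtype

/-- `W` is a dot_k-subspace of `(F^n, dot_n)`: the restricted form is isometrically
isomorphic to `dot_k`. -/
def IsDotSub (F : Type) [Field F] (n k : ℕ) (W : Submodule F (Fin n → F)) : Prop :=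
  Nonempty (QuadraticMap.IsometryEquiv (restForm F n W) (dotForm F k))

namespace DotAux

open QuadraticMap Finset

variable {F : Type} [Field F]

lemma polar_wSS {ι : Type*} [Fintype ι] (w : ι → F) (x y : ι → F) :
    QuadraticMap.polar (weightedSumSquares F w) x y = ∑ i, w i * (2 * x i * y i) := by
  simp only [QuadraticMap.polar, weightedSumSquares_apply, smul_eq_mul, Pi.add_apply,
    ← Finset.sum_sub_distrib]
  exact Finset.sum_congr rfl fun i _ => by ring

/-- The linear equivalence `(Fin a → F) × (Fin b → F) ≃ₗ (Fin (a+b) → F)` by `Fin.append`. -/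
def appendLE (a b : ℕ) : ((Fin a → F) × (Fin b → F)) ≃ₗ[F] (Fin (a + b) → F) where
  toFun p := Fin.append p.1 p.2
  map_add' p q := by
    funext i
    refine Fin.addCases (fun j => ?_) (fun j => ?_) i <;>
      simp [Fin.append_left, Fin.append_right]
  map_smul' c p := by
    funext i
    refine Fin.addCases (fun j => ?_) (fun j => ?_) i <;>
      simp [Fin.append_left, Fin.append_right]
  invFun v := (fun i => v (Fin.castAdd b i), fun i => v (Fin.natAdd a i))
  left_inv p := by
    refine Prod.ext (funext fun i => ?_) (funext fun i => ?_) <;>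
      simp [Fin.append_left, Fin.append_right]
  right_inv v := by
    funext i
    refine Fin.addCases (fun j => ?_) (fun j => ?_) i <;>
      simp [Fin.append_left, Fin.append_right]

/-- Orthogonal sum of weighted sums of squares. -/
noncomputable def isoAppend (a b : ℕ) (w₁ : Fin a → F) (w₂ : Fin b → F) :
    ((weightedSumSquares F w₁).prod (weightedSumSquares F w₂)).IsometryEquiv
      (weightedSumSquares F (Fin.append w₁ w₂)) :=
  { appendLE a b with
    map_app' := fun p => by
      show weightedSumSquares F (Fin.append w₁ w₂) (Fin.append p.1 p.2) = _
      rw [weightedSumSquares_apply, Fin.sum_univ_add]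
      simp [Fin.append_left, Fin.append_right, QuadraticMap.prod_apply,
        weightedSumSquares_apply] }

noncomputable def isoCongr {ι : Type*} [Fintype ι] {w w' : ι → F} (h : w = w') :
    (weightedSumSquares F w).IsometryEquiv (weightedSumSquares F w') :=
  h ▸ QuadraticMap.IsometryEquiv.refl _

lemma append_one (a b : ℕ) :
    Fin.append (fun _ : Fin a => (1 : F)) (fun _ : Fin b => (1 : F)) =
      fun _ : Fin (a + b) => (1 : F) := by
  funext i
  refine Fin.addCases (fun j => ?_) (fun j => ?_) i <;>
    simp [Fin.append_left, Fin.append_right]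

noncomputable def dotSum (a b : ℕ) :
    ((dotForm F a).prod (dotForm F b)).IsometryEquiv (dotForm F (a + b)) :=
  (isoAppend a b (fun _ => 1) (fun _ => 1)).trans (isoCongr (append_one a b))

/-- Associativity isometry for products of quadratic forms. -/
noncomputable def isoAssoc {M₁ M₂ M₃ : Type*} [AddCommGroup M₁] [Module F M₁]
    [AddCommGroup M₂] [Module F M₂] [AddCommGroup M₃] [Module F M₃]
    (Q₁ : QuadraticForm F M₁) (Q₂ : QuadraticForm F M₂) (Q₃ : QuadraticForm F M₃) :
    (Q₁.prod (Q₂.prod Q₃)).IsometryEquiv ((Q₁.prod Q₂).prod Q₃) where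
  toFun p := ((p.1, p.2.1), p.2.2)
  invFun p := (p.1.1, (p.1.2, p.2))
  map_add' _ _ := rfl
  map_smul' _ _ := rfl
  left_inv _ := rfl
  right_inv _ := rfl
  map_app' p := by simp [QuadraticMap.prod_apply, add_assoc]

lemma exists_one [Fintype F] (hcard : Fintype.card F % 2 = 1) {a b : F} (ha : a ≠ 0) (hb : b ≠ 0) :
    ∃ x y : F, a * x ^ 2 + b * y ^ 2 = 1 := by
  obtain ⟨x, y, hxy⟩ := FiniteField.exists_root_sum_quadratic
    (f := Polynomial.C a * Polynomial.X ^ 2)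
    (g := Polynomial.C b * Polynomial.X ^ 2 - Polynomial.C 1)
    (Polynomial.degree_C_mul_X_pow 2 ha)
    (by rw [Polynomial.degree_sub_C (by rw [Polynomial.degree_C_mul_X_pow 2 hb]; decide)]
        exact Polynomial.degree_C_mul_X_pow 2 hb)
    hcard
  refine ⟨x, y, ?_⟩
  simp only [Polynomial.eval_add, Polynomial.eval_mul, Polynomial.eval_pow, Polynomial.eval_C,
    Polynomial.eval_X, Polynomial.eval_sub] at hxy
  linear_combination hxy

lemma isoBinary [Fintype F] (hcard : Fintype.card F % 2 = 1) {a b : F} (ha : a ≠ 0) (hb : b ≠ 0) :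
    Nonempty ((weightedSumSquares F ![a * b, 1]).IsometryEquiv
      (weightedSumSquares F ![a, b])) := by
  obtain ⟨x, y, hxy⟩ := exists_one hcard ha hb
  set M : Matrix (Fin 2) (Fin 2) F := ![![-(b * y), x], ![a * x, y]] with hM
  set N : Matrix (Fin 2) (Fin 2) F := ![![-y, x], ![a * x, b * y]] with hN
  have hMN : M * N = 1 := by
    ext i j
    rw [Matrix.mul_apply]
    fin_cases i <;> fin_cases j <;>
      simp [hM, hN, Matrix.mul_apply, Fin.sum_univ_two, Matrix.one_apply] <;>
      first
      | ring1
      | linear_combination hxy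
      | linear_combination -hxy
      | linear_combination 2 * hxy
      | linear_combination -2 * hxy
  have hNM : N * M = 1 := by
    ext i j
    rw [Matrix.mul_apply]
    fin_cases i <;> fin_cases j <;>
      simp [hM, hN, Matrix.mul_apply, Fin.sum_univ_two, Matrix.one_apply] <;>
      first
      | ring1
      | linear_combination hxy
      | linear_combination -hxy
      | linear_combination 2 * hxy
      | linear_combination -2 * hxy
  refine ⟨{ LinearEquiv.ofLinear (re₁₂ := RingHomInvPair.ids) (re₂₁ := RingHomInvPair.ids) (Matrix.toLin' M) (Matrix.toLin' N)
      (by rw [← Matrix.toLin'_mul, hMN, Matrix.toLin'_one])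
      (by rw [← Matrix.toLin'_mul, hNM, Matrix.toLin'_one]) with
    map_app' := fun p => ?_ }⟩
  show weightedSumSquares F ![a, b] (Matrix.toLin' M p) = _
  rw [weightedSumSquares_apply, weightedSumSquares_apply, Matrix.toLin'_apply]
  simp only [Matrix.toLin'_apply, Fin.sum_univ_two, Matrix.mulVec, dotProduct,
    hM, Matrix.cons_val', Matrix.cons_val_zero, Matrix.cons_val_one, Matrix.head_cons,
    Matrix.empty_val', Matrix.cons_val_fin_one, Matrix.head_fin_const, smul_eq_mul]
  linear_combination (a * b * (p 0 * p 0) + p 1 * p 1) * hxy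

/-- Classification: a diagonal form over a finite field of odd characteristic whose
discriminant is a nonzero square is isometric to the standard dot form. -/
lemma classify [Fintype F] (hcard : Fintype.card F % 2 = 1) :
    ∀ (m : ℕ) (w : Fin m → F), (∃ c : F, c ≠ 0 ∧ ∏ i, w i = c ^ 2) →
      Nonempty ((weightedSumSquares F w).IsometryEquiv (dotForm F m)) := by
  intro m
  induction m using Nat.strong_induction_on with
  | _ m IH =>
    match m with
    | 0 =>
      intro w _
      exact ⟨isoCongr (funext fun i => i.elim0)⟩
    | 1 =>
      rintro w ⟨c, hc, hprod⟩
      rw [Fin.prod_univ_one] at hprod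
      refine ⟨{ LinearEquiv.smulOfNeZero F (Fin 1 → F) c hc with map_app' := fun p => ?_ }⟩
      show dotForm F 1 (c • p) = weightedSumSquares F w p
      rw [show dotForm F 1 = weightedSumSquares F (fun _ : Fin 1 => (1:F)) from rfl]
      rw [weightedSumSquares_apply, weightedSumSquares_apply, Fin.sum_univ_one,
        Fin.sum_univ_one, hprod]
      simp only [Pi.smul_apply, smul_eq_mul, one_mul]
      ring
    | (s + 2) =>
      rintro w ⟨c, hc, hprod⟩
      have hne : ∀ i, w i ≠ 0 := by
        intro i hi
        apply hc
        have h0 : ∏ i, w i = 0 := Finset.prod_eq_zero (Finset.mem_univ i) hi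
        rw [h0] at hprod
        exact (pow_eq_zero_iff (two_ne_zero)).mp hprod.symm
      set u : Fin s → F := fun i => w (Fin.castAdd 2 i) with hu
      set v : Fin 2 → F := fun i => w (Fin.natAdd s i) with hv
      have hw : w = Fin.append u v := by
        funext i
        refine Fin.addCases (fun j => ?_) (fun j => ?_) i <;>
          simp [Fin.append_left, Fin.append_right, hu, hv]
      have hv2 : v = ![v 0, v 1] := by
        funext i; fin_cases i <;> rfl
      obtain ⟨ib⟩ := isoBinary hcard (hne (Fin.natAdd s 0)) (hne (Fin.natAdd s 1))
      have h1 : (![v 0 * v 1, (1:F)]) = Fin.append ![v 0 * v 1] ![(1:F)] := by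
        funext i; fin_cases i <;> rfl
      have hprod' : ∏ i, Fin.append u ![v 0 * v 1] i = c ^ 2 := by
        rw [hw] at hprod
        rw [Fin.prod_univ_add] at hprod ⊢
        simp only [Fin.append_left, Fin.append_right] at hprod ⊢
        rw [Fin.prod_univ_two] at hprod
        rw [Fin.prod_univ_one]
        rw [← hprod]
        simp [Matrix.cons_val_zero]
      obtain ⟨ihiso⟩ := IH (s + 1) (by omega) (Fin.append u ![v 0 * v 1]) ⟨c, hc, hprod'⟩
      have i1 : (weightedSumSquares F ![(1:F)]).IsometryEquiv (dotForm F 1) :=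
        isoCongr (by funext i; fin_cases i <;> rfl)
      have e2 : (weightedSumSquares F v).IsometryEquiv
          ((weightedSumSquares F ![v 0 * v 1]).prod (weightedSumSquares F ![(1:F)])) :=
        (isoCongr hv2).trans (ib.symm.trans
          ((isoCongr h1).trans (isoAppend 1 1 ![v 0 * v 1] ![(1:F)]).symm))
      have e3 : (weightedSumSquares F w).IsometryEquiv
          ((weightedSumSquares F u).prod ((weightedSumSquares F ![v 0 * v 1]).prod
            (weightedSumSquares F ![(1:F)]))) :=
        ((isoCongr hw).trans (isoAppend s 2 u v).symm).trans
          ((QuadraticMap.IsometryEquiv.refl _).prod e2)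
      have e4 := e3.trans (isoAssoc _ _ _)
      have e5 := (isoAppend s 1 u ![v 0 * v 1]).trans ihiso
      exact ⟨(e4.trans (e5.prod i1)).trans (dotSum (s + 1) 1)⟩

section Discr

variable [Invertible (2 : F)]

lemma toMatrix'_wSS {m : ℕ} (w : Fin m → F) :
    QuadraticForm.toMatrix' (weightedSumSquares F w) = Matrix.diagonal w := by
  ext i j
  rw [QuadraticForm.toMatrix', LinearMap.toMatrix₂'_apply]
  have : (associated (R := F) (weightedSumSquares F w)) (Pi.single i 1) (Pi.single j 1) =
      ⅟(2:F) * QuadraticMap.polar (weightedSumSquares F w) (Pi.single i 1) (Pi.single j 1) := by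
    rw [QuadraticMap.associated_apply]
    rfl
  rw [this, polar_wSS]
  rcases eq_or_ne i j with rfl | hij
  · rw [Finset.sum_eq_single i]
    · simp only [Pi.single_eq_same, mul_one, Matrix.diagonal_apply_eq]
      have h22 : (2:F) * ⅟(2:F) = 1 := mul_invOf_self 2
      linear_combination (w i) * h22
    · intro k _ hk
      simp [Pi.single_apply, hk]
    · simp
  · rw [Finset.sum_eq_zero, mul_zero, Matrix.diagonal_apply_ne _ hij]
    intro k _
    rcases eq_or_ne k i with rfl | hki
    · simp [Pi.single_apply, Ne.symm hij]
    · simp [Pi.single_apply, hki]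

lemma discr_wSS {m : ℕ} (w : Fin m → F) :
    QuadraticForm.discr' (weightedSumSquares F w) = ∏ i, w i := by
  rw [QuadraticForm.discr', toMatrix'_wSS, Matrix.det_diagonal]

lemma discr_iso {m : ℕ} {Q₁ Q₂ : QuadraticForm F (Fin m → F)}
    (f : Q₁.IsometryEquiv Q₂) : ∃ d : F, d ≠ 0 ∧ Q₁.discr' = d ^ 2 * Q₂.discr' := by
  set g := (f.toLinearEquiv : (Fin m → F) →ₗ[F] (Fin m → F)) with hg
  set g' := (f.toLinearEquiv.symm : (Fin m → F) →ₗ[F] (Fin m → F)) with hg'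
  have hQ : Q₂.comp g = Q₁ := by
    ext x
    rw [QuadraticMap.comp_apply]
    exact f.map_app x
  have hgg' : LinearMap.toMatrix' g * LinearMap.toMatrix' g' = 1 := by
    rw [← LinearMap.toMatrix'_comp]
    have hcomp : g.comp g' = LinearMap.id := by
      ext x
      simp [hg, hg']
    rw [hcomp, LinearMap.toMatrix'_id]
  have hdet : (LinearMap.toMatrix' g).det ≠ 0 := by
    intro h0
    have hd := congrArg Matrix.det hgg'
    rw [Matrix.det_mul, h0, zero_mul, Matrix.det_one] at hd
    exact zero_ne_one hd
  refine ⟨(LinearMap.toMatrix' g).det, hdet, ?_⟩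
  have hdc := QuadraticForm.discr'_comp (Q := Q₂) g
  rw [hQ] at hdc
  rw [hdc]
  ring

end Discr

lemma polar_restForm {n : ℕ} (K : Submodule F (Fin n → F)) (x y : K) :
    QuadraticMap.polar (restForm F n K) x y =
      QuadraticMap.polar (dotForm F n) (x : Fin n → F) (y : Fin n → F) := by
  simp [restForm, QuadraticMap.polar, QuadraticMap.comp_apply]

lemma iso_polar {M₁ M₂ : Type*} [AddCommGroup M₁] [Module F M₁] [AddCommGroup M₂] [Module F M₂]
    {Q₁ : QuadraticForm F M₁} {Q₂ : QuadraticForm F M₂} (f : Q₁.IsometryEquiv Q₂) (x y : M₁) :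
    QuadraticMap.polar Q₂ (f x) (f y) = QuadraticMap.polar Q₁ x y := by
  simp only [QuadraticMap.polar]
  rw [← map_add, f.map_app, f.map_app, f.map_app]

lemma dot_polar_nondeg (h2 : (2:F) ≠ 0) (m : ℕ) :
    LinearMap.BilinForm.Nondegenerate (QuadraticMap.polarBilin (dotForm F m)) := by
  refine LinearMap.BilinForm.Nondegenerate.ofSeparatingLeft ?_
  intro x hx
  funext i
  have h := hx (Pi.single i 1)
  rw [QuadraticMap.polarBilin_apply_apply,
    show dotForm F m = weightedSumSquares F (fun _ : Fin m => (1:F)) from rfl,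
    polar_wSS] at h
  rw [Finset.sum_eq_single i] at h
  · simp only [Pi.single_eq_same, one_mul, mul_one] at h
    have := mul_eq_zero.mp h
    simpa [h2] using this
  · intro k _ hk
    simp [Pi.single_apply, hk]
  · simp

lemma restK_nondeg (h2 : (2:F) ≠ 0) {n m : ℕ} (K : Submodule F (Fin n → F))
    (φ : (restForm F n K).IsometryEquiv (dotForm F m)) :
    LinearMap.BilinForm.Nondegenerate
      (LinearMap.BilinForm.restrict (QuadraticMap.polarBilin (dotForm F n)) K) := by
  refine LinearMap.BilinForm.Nondegenerate.ofSeparatingLeft ?_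
  intro x hx
  have hφ : ∀ z, QuadraticMap.polar (dotForm F m) (φ x) z = 0 := by
    intro z
    have h := hx (φ.symm z)
    rw [LinearMap.BilinForm.restrict_apply, LinearMap.domRestrict_apply, QuadraticMap.polarBilin_apply_apply] at h
    have h2' := iso_polar φ x (φ.symm z)
    have happ : φ (φ.symm z) = z := φ.toLinearEquiv.apply_symm_apply z
    rw [happ, polar_restForm] at h2'
    rw [h2']
    exact h
  have hz : φ x = 0 := by
    refine (dot_polar_nondeg h2 m).1 (φ x) (fun z => ?_)
    rw [QuadraticMap.polarBilin_apply_apply]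
    exact hφ z
  exact φ.toLinearEquiv.map_eq_zero_iff.mp hz

lemma isoSup {n : ℕ} (K W : Submodule F (Fin n → F)) (hdisj : K ⊓ W = ⊥)
    (horth : ∀ a ∈ K, ∀ b ∈ W, QuadraticMap.polar (dotForm F n) a b = 0) :
    Nonempty (((restForm F n K).prod (restForm F n W)).IsometryEquiv
      (restForm F n (K ⊔ W))) := by
  have hg : ∀ p : K × W, ((p.1 : Fin n → F) + (p.2 : Fin n → F)) ∈ K ⊔ W := fun p =>
    Submodule.add_mem_sup p.1.2 p.2.2
  let g : (K × W) →ₗ[F] ↥(K ⊔ W) :=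
  { toFun := fun p => ⟨(p.1 : Fin n → F) + (p.2 : Fin n → F), hg p⟩
    map_add' := fun p q => by
      apply Subtype.ext
      simp only [Submodule.coe_add, Prod.fst_add, Prod.snd_add]
      ring
    map_smul' := fun c p => by
      ext
      simp only [Submodule.coe_smul, Prod.smul_fst, Prod.smul_snd, RingHom.id_apply,
        smul_add] }
  have hinj : Function.Injective g := by
    intro p q hpq
    have hco : (p.1 : Fin n → F) + p.2 = (q.1 : Fin n → F) + q.2 :=
      congrArg Subtype.val hpq
    have hmem : ((p.1 : Fin n → F) - q.1) ∈ K ⊓ W := by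
      refine Submodule.mem_inf.mpr ⟨sub_mem p.1.2 q.1.2, ?_⟩
      have : (p.1 : Fin n → F) - q.1 = (q.2 : Fin n → F) - p.2 := by
        linear_combination hco
      rw [this]
      exact sub_mem q.2.2 p.2.2
    rw [hdisj, Submodule.mem_bot, sub_eq_zero] at hmem
    have h2 : (p.2 : Fin n → F) = q.2 := by linear_combination hco - hmem
    exact Prod.ext (Subtype.ext hmem) (Subtype.ext h2)
  have hsurj : Function.Surjective g := by
    rintro ⟨z, hz⟩
    obtain ⟨a, ha, b, hb, rfl⟩ := Submodule.mem_sup.mp hz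
    exact ⟨(⟨a, ha⟩, ⟨b, hb⟩), rfl⟩
  refine ⟨{ LinearEquiv.ofBijective g ⟨hinj, hsurj⟩ with map_app' := fun p => ?_ }⟩
  show restForm F n (K ⊔ W) (g p) = _
  have hp : QuadraticMap.polar (dotForm F n) (p.1 : Fin n → F) (p.2 : Fin n → F) = 0 :=
    horth _ p.1.2 _ p.2.2
  simp only [QuadraticMap.polar] at hp
  show dotForm F n ((p.1 : Fin n → F) + (p.2 : Fin n → F)) = _
  rw [QuadraticMap.prod_apply]
  show _ = dotForm F n (p.1 : Fin n → F) + dotForm F n (p.2 : Fin n → F)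
  linear_combination hp

end DotAux

/-- For a dot_k-subspace `K` of `(F_q^n, dot_n)` with orthogonal
complement `K^⊥` (with respect to the bilinear form of `dot_n`), we have
`F_q^n = K ⊕ K^⊥`, and `W ↦ K ⊕ W` is a bijection from the dot_{h−k}-subspaces
contained in `K^⊥` onto the dot_h-subspaces containing `K`. -/
theorem dot_h_containing_dot_k_bijection (n k h : ℕ) (hk : 0 < k) (hkh : k < h) (hhn : h ≤ n)
    (F : Type) [Field F] [Fintype F] (hq : Odd (Fintype.card F))
    (K : Submodule F (Fin n → F)) (hK : IsDotSub F n k K) :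
    IsCompl K (LinearMap.BilinForm.orthogonal (QuadraticMap.polarBilin (dotForm F n)) K) ∧
      Set.BijOn (fun W => K ⊔ W)
        {W : Submodule F (Fin n → F) |
          W ≤ LinearMap.BilinForm.orthogonal (QuadraticMap.polarBilin (dotForm F n)) K ∧ IsDotSub F n (h - k) W}
        {H : Submodule F (Fin n → F) | IsDotSub F n h H ∧ K ≤ H} := by
  classical
  have hcard : Fintype.card F % 2 = 1 := Nat.odd_iff.mp hq
  have h2 : (2 : F) ≠ 0 := by
    intro h0
    have hdvd : ringChar F ∣ 2 := ringChar.dvd (by exact_mod_cast h0)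
    rcases (Nat.dvd_prime Nat.prime_two).mp hdvd with h1 | hc2
    · exact CharP.char_ne_one F (ringChar F) h1
    · have := FiniteField.even_card_iff_char_two.mp hc2
      omega
  letI : Invertible (2 : F) := invertibleOfNonzero h2
  set B := QuadraticMap.polarBilin (dotForm F n) with hB
  obtain ⟨φK⟩ := hK
  have hrefl : B.IsRefl := by
    intro x y hxy
    rw [hB, QuadraticMap.polarBilin_apply_apply] at hxy ⊢
    rwa [QuadraticMap.polar_comm]
  have hrest : LinearMap.BilinForm.Nondegenerate (LinearMap.BilinForm.restrict B K) :=
    DotAux.restK_nondeg h2 K φK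
  have hcompl : IsCompl K (LinearMap.BilinForm.orthogonal B K) :=
    LinearMap.BilinForm.isCompl_orthogonal_of_restrict_nondegenerate hrefl hrest
  have horthK : ∀ (W : Submodule F (Fin n → F)), W ≤ LinearMap.BilinForm.orthogonal B K →
      ∀ a ∈ K, ∀ b ∈ W, QuadraticMap.polar (dotForm F n) a b = 0 := by
    intro W hWle a ha b hb
    have hmem := (LinearMap.BilinForm.mem_orthogonal_iff.mp (hWle hb)) a ha
    rwa [hB, QuadraticMap.polarBilin_apply_apply] at hmem
  refine ⟨hcompl, ⟨?_, ?_, ?_⟩⟩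
  · -- MapsTo
    rintro W ⟨hWle, hWdot⟩
    obtain ⟨φW⟩ := hWdot
    have hdisj : K ⊓ W = ⊥ := disjoint_iff.mp (hcompl.disjoint.mono_right hWle)
    obtain ⟨ψ⟩ := DotAux.isoSup K W hdisj (horthK W hWle)
    refine ⟨⟨?_⟩, le_sup_left⟩
    rw [show h = k + (h - k) from (Nat.add_sub_cancel' hkh.le).symm]
    exact (ψ.symm.trans (φK.prod φW)).trans (DotAux.dotSum k (h - k))
  · -- InjOn
    rintro W₁ ⟨h1le, -⟩ W₂ ⟨h2le, -⟩ heq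
    have key : ∀ W : Submodule F (Fin n → F), W ≤ LinearMap.BilinForm.orthogonal B K →
        (K ⊔ W) ⊓ LinearMap.BilinForm.orthogonal B K = W := by
      intro W hWle
      refine le_antisymm ?_ (le_inf le_sup_right hWle)
      rintro x hx
      obtain ⟨hxsup, hxorth⟩ := Submodule.mem_inf.mp hx
      obtain ⟨a, ha, b, hb, rfl⟩ := Submodule.mem_sup.mp hxsup
      have hmem : a ∈ K ⊓ LinearMap.BilinForm.orthogonal B K := by
        refine Submodule.mem_inf.mpr ⟨ha, ?_⟩
        have hab : a = (a + b) - b := (add_sub_cancel_right a b).symm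
        rw [hab]
        exact sub_mem hxorth (hWle hb)
      rw [disjoint_iff.mp hcompl.disjoint, Submodule.mem_bot] at hmem
      rw [hmem, zero_add]
      exact hb
    have heq' : K ⊔ W₁ = K ⊔ W₂ := heq
    rw [← key W₁ h1le, ← key W₂ h2le, heq']
  · -- SurjOn
    rintro H ⟨hHdot, hKH⟩
    set W := H ⊓ LinearMap.BilinForm.orthogonal B K with hWdef
    have hWle : W ≤ LinearMap.BilinForm.orthogonal B K := inf_le_right
    have hsup : K ⊔ W = H := by
      refine le_antisymm (sup_le hKH inf_le_left) ?_
      intro x hxH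
      have hxtop : x ∈ K ⊔ LinearMap.BilinForm.orthogonal B K := by
        rw [hcompl.sup_eq_top]; trivial
      obtain ⟨a, ha, b, hb, rfl⟩ := Submodule.mem_sup.mp hxtop
      have hbH : b ∈ H := by
        have hab : b = (a + b) - a := (add_sub_cancel_left a b).symm
        rw [hab]
        exact sub_mem hxH (hKH ha)
      exact Submodule.add_mem_sup ha (Submodule.mem_inf.mpr ⟨hbH, hb⟩)
    have hdisj : K ⊓ W = ⊥ := disjoint_iff.mp (hcompl.disjoint.mono_right hWle)
    obtain ⟨ψ⟩ := DotAux.isoSup K W hdisj (horthK W hWle)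
    rw [hsup] at ψ
    obtain ⟨φH⟩ := hHdot
    obtain ⟨w, hwEquiv⟩ := QuadraticForm.equivalent_weightedSumSquares (restForm F n W)
    obtain ⟨χ⟩ := hwEquiv
    have hkK : Module.finrank F ↥K = k := by
      have hfr := φK.toLinearEquiv.finrank_eq
      rwa [Module.finrank_fin_fun] at hfr
    have hh : h = k + Module.finrank F ↥W := by
      have e : (↥K × ↥W) ≃ₗ[F] (Fin h → F) := (ψ.trans φH).toLinearEquiv
      have hfr := e.finrank_eq
      rw [Module.finrank_prod, hkK, Module.finrank_fin_fun] at hfr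
      omega
    have bigiso : (dotForm F (k + Module.finrank F ↥W)).IsometryEquiv
        (QuadraticMap.weightedSumSquares F (Fin.append (fun _ : Fin k => (1 : F)) w)) := by
      have step1 : (dotForm F h).IsometryEquiv
          ((dotForm F k).prod (QuadraticMap.weightedSumSquares F w)) :=
        (φH.symm.trans ψ.symm).trans (φK.prod χ)
      have step2 : ((dotForm F k).prod (QuadraticMap.weightedSumSquares F w)).IsometryEquiv
          (QuadraticMap.weightedSumSquares F (Fin.append (fun _ : Fin k => (1 : F)) w)) :=
        DotAux.isoAppend k (Module.finrank F ↥W) (fun _ => (1 : F)) w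
      have hbig := step1.trans step2
      rw [hh] at hbig
      exact hbig
    obtain ⟨d, hd, hdiscr⟩ := DotAux.discr_iso bigiso
    have hdotdiscr : QuadraticForm.discr' (dotForm F (k + Module.finrank F ↥W)) = 1 := by
      rw [show dotForm F (k + Module.finrank F ↥W)
          = QuadraticMap.weightedSumSquares F (fun _ : Fin (k + Module.finrank F ↥W) => (1 : F)) from rfl,
        DotAux.discr_wSS]
      simp
    have happdiscr :
        QuadraticForm.discr' (QuadraticMap.weightedSumSquares F (Fin.append (fun _ : Fin k => (1 : F)) w))
          = ∏ i, w i := by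
      rw [DotAux.discr_wSS, Fin.prod_univ_add]
      simp [Fin.append_left, Fin.append_right]
    rw [hdotdiscr, happdiscr] at hdiscr
    have hprodw : ∏ i, w i = d⁻¹ ^ 2 := by
      rw [inv_pow]
      exact eq_inv_of_mul_eq_one_left (by linear_combination -hdiscr)
    obtain ⟨ξ⟩ := DotAux.classify hcard (Module.finrank F ↥W) w ⟨d⁻¹, inv_ne_zero hd, hprodw⟩
    refine ⟨W, ⟨hWle, ?_⟩, hsup⟩
    rw [show h - k = Module.finrank F ↥W from by omega]
    exact ⟨χ.trans ξ⟩
end
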